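/- Every T₁ topological space satisfying the well-ordered (F) condition is a D-space. -/

import Mathlib

open Set Topology

/-- The core (F) condition for a family `W` assigning to each point a collection of subsets. -/
def FFamilyCondition {X : Type*} [TopologicalSpace X] (W : X → Set (Set X)) : Prop :=
  (∀ x, ∀ w ∈ W x, x ∈ w) ∧
  ∀ x U, IsOpen U → x ∈ U → ∃ V, IsOpen V ∧ x ∈ V ∧
    ∀ y ∈ V, ∃ w ∈ W y, x ∈ w ∧ w ⊆ U

/-- `X` satisfies well-ordered (F): each `W x` is well-ordered by reverse inclusion. -/
def SatisfiesWellOrderedF (X : Type*) [TopologicalSpace X] : Prop :=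
  ∃ W : X → Set (Set X),
    (∀ x, IsWellOrder (W x) (fun A B => (B : Set X) ⊂ (A : Set X))) ∧
    FFamilyCondition W

/-- `X` satisfies chain (F): each `W x` is linearly ordered by (reverse) inclusion. -/
def SatisfiesChainF (X : Type*) [TopologicalSpace X] : Prop :=
  ∃ W : X → Set (Set X),
    (∀ x, IsChain (· ⊆ ·) (W x)) ∧
    FFamilyCondition W

/-- `X` satisfies decreasing (G). -/
def SatisfiesDecreasingG (X : Type*) [TopologicalSpace X] : Prop :=
  ∃ W : X → ℕ → Set X,
    (∀ x k, x ∈ W x k) ∧ (∀ x k, W x (k + 1) ⊆ W x k) ∧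
    ∀ x U, IsOpen U → x ∈ U → ∃ V, IsOpen V ∧ x ∈ V ∧
      ∀ y ∈ V, ∃ m, x ∈ W y m ∧ W y m ⊆ U

universe u_hn

/-- The `H`/`n` characterization with ordinal-valued `n`. -/
def HNAssignment (X : Type u_hn) [TopologicalSpace X] : Prop :=
  ∃ (H : X → Set X → Set X) (n : X → X → Set X → Ordinal.{u_hn}),
    (∀ x U, IsOpen U → x ∈ U → IsOpen (H x U) ∧ x ∈ H x U) ∧
    (∀ a x y U V, IsOpen U → x ∈ U → IsOpen V → y ∈ V →
      a ∈ H x U → a ∈ H y V → n a x U ≤ n a y V → y ∈ U)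

/-- `X` is a D-space: every neighborhood assignment has a closed discrete kernel. -/
def IsDSpace (X : Type*) [TopologicalSpace X] : Prop :=
  ∀ φ : X → Set X, (∀ x, IsOpen (φ x)) → (∀ x, x ∈ φ x) →
    ∃ D : Set X, IsClosed D ∧ DiscreteTopology D ∧ ⋃ d ∈ D, φ d = Set.univ

/- ### Auxiliary machinery for the proof of `stmt2`.

Given a neighborhood assignment `φ`, we build a transfinite sequence of points:
at a successor stage `τ + 1`, we "serve" the previously picked point `a = seq τ`:
among all members `w ∈ W a` such that `w ⊆ φ y` for some still-uncovered `y`, we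
take the `⊆`-largest one (the minimum in the well order by reverse inclusion) and
pick such a `y` as the next point. At limit stages we pick an arbitrary uncovered
point.  The key property: if `z` is still uncovered after stage `τ + 1` and `W (seq τ)`
contains a set `w` with `z ∈ w ⊆ φ z`, then `z ∈ φ (seq (τ+1))` — because the chosen
largest set contains `w` (by comparability) and hence contains `z`. Combined with
the (F) condition this forces the picked points to form a closed discrete set. -/

universe u

section GruenhageAux

attribute [local instance] Classical.propDecidable

set_option linter.unusedSectionVars false

variable {X : Type u} [TopologicalSpace X]

/-- Pick an element outside `O` if possible. -/
noncomputable def gUncov [Nonempty X] (O : Set X) : X :=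
  if h : ∃ y, y ∉ O then h.choose else Classical.arbitrary X

theorem gUncov_spec [Nonempty X] {O : Set X} (h : ∃ y, y ∉ O) : gUncov O ∉ O := by
  rw [gUncov, dif_pos h]; exact h.choose_spec

variable (φ : X → Set X) (W : X → Set (Set X))
variable (hwo : ∀ x, IsWellOrder (W x) (fun A B => (B : Set X) ⊂ (A : Set X)))

/-- Members of `W a` that fit inside `φ y` for some `y ∉ O`. -/
def gS (a : X) (O : Set X) : Set (↥(W a)) :=
  {w : ↥(W a) | ∃ y, y ∉ O ∧ (w : Set X) ⊆ φ y}

/-- The `⊆`-largest member of `gS`. -/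
noncomputable def gMin (a : X) (O : Set X) (hC : (gS φ W a O).Nonempty) : ↥(W a) :=
  WellFounded.min (hwo a).toIsWellFounded.wf (gS φ W a O) hC

theorem gMin_mem' (a : X) (O : Set X) (hC : (gS φ W a O).Nonempty) :
    ∃ y, y ∉ O ∧ ((gMin φ W hwo a O hC : ↥(W a)) : Set X) ⊆ φ y :=
  WellFounded.min_mem (hwo a).toIsWellFounded.wf (gS φ W a O) hC

theorem gMin_not_lt (a : X) (O : Set X) (hC : (gS φ W a O).Nonempty)
    {w : ↥(W a)} (hw : w ∈ gS φ W a O) :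
    ¬ (((gMin φ W hwo a O hC : ↥(W a)) : Set X) ⊂ (w : Set X)) :=
  WellFounded.not_lt_min (hwo a).toIsWellFounded.wf (gS φ W a O) hw

/-- The next point: serve `a` if possible, otherwise pick any uncovered point. -/
noncomputable def gPick [Nonempty X] (a : X) (O : Set X) : X :=
  if hC : (gS φ W a O).Nonempty then (gMin_mem' φ W hwo a O hC).choose
  else gUncov O

theorem gPick_not_mem [Nonempty X] {a : X} {O : Set X} (hU : ∃ y, y ∉ O) :
    gPick φ W hwo a O ∉ O := by
  rw [gPick]; split_ifs with hC
  · exact (gMin_mem' φ W hwo a O hC).choose_spec.1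
  · exact gUncov_spec hU

theorem gPick_covers [Nonempty X] {a : X} {O : Set X} {z : X} (hz : z ∉ O)
    (hw : ∃ w ∈ W a, z ∈ w ∧ w ⊆ φ z) : z ∈ φ (gPick φ W hwo a O) := by
  obtain ⟨w, hwW, hzw, hsub⟩ := hw
  have hwS : (⟨w, hwW⟩ : ↥(W a)) ∈ gS φ W a O := ⟨z, hz, hsub⟩
  have hC : (gS φ W a O).Nonempty := ⟨_, hwS⟩
  rw [gPick, dif_pos hC]
  have hspec := (gMin_mem' φ W hwo a O hC).choose_spec
  refine hspec.2 ?_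
  rcases (haveI := hwo a; trichotomous_of (fun A B : ↥(W a) => (B : Set X) ⊂ (A : Set X)) (gMin φ W hwo a O hC) ⟨w, hwW⟩) with h | h | h
  · exact h.subset hzw
  · rw [h]; exact hzw
  · exact absurd h (gMin_not_lt φ W hwo a O hC hwS)

/-- One step of the transfinite recursion. -/
noncomputable def gStep [Nonempty X] (σ : Ordinal.{u}) (prev : ∀ τ : Ordinal.{u}, τ < σ → X) : X :=
  if hs : ∃ τ : Ordinal.{u}, σ = τ + 1 then
    gPick φ W hwo
      (prev hs.choose (lt_of_lt_of_eq
        (by rw [Ordinal.add_one_eq_succ]; exact Order.lt_succ _) hs.choose_spec.symm))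
      {x | ∃ τ, ∃ h : τ < σ, x ∈ φ (prev τ h)}
  else gUncov {x | ∃ τ, ∃ h : τ < σ, x ∈ φ (prev τ h)}

/-- The transfinite sequence of picked points. -/
noncomputable def gSeq [Nonempty X] : Ordinal.{u} → X :=
  WellFounded.fix Ordinal.lt_wf (fun σ ih => gStep φ W hwo σ ih)

theorem gSeq_eq [Nonempty X] (σ : Ordinal.{u}) :
    gSeq φ W hwo σ = gStep φ W hwo σ (fun τ _ => gSeq φ W hwo τ) :=
  WellFounded.fix_eq _ _ _

/-- The region covered before stage `σ`. -/
def gCov [Nonempty X] (σ : Ordinal.{u}) : Set X :=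
  {x | ∃ τ, ∃ _h : τ < σ, x ∈ φ (gSeq φ W hwo τ)}

theorem gSeq_not_mem [Nonempty X] {σ : Ordinal.{u}} (hU : ∃ y, y ∉ gCov φ W hwo σ) :
    gSeq φ W hwo σ ∉ gCov φ W hwo σ := by
  rw [gSeq_eq φ W hwo σ]
  rw [gStep]
  split_ifs with hs
  · exact gPick_not_mem φ W hwo hU
  · exact gUncov_spec hU

theorem gSucc_cancel {a b : Ordinal.{u}} (h : a + 1 = b + 1) : a = b := by
  have h1 : a < b + 1 := by rw [← h, Ordinal.add_one_eq_succ]; exact Order.lt_succ _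
  have h2 : b < a + 1 := by rw [h, Ordinal.add_one_eq_succ]; exact Order.lt_succ _
  rw [Ordinal.add_one_eq_succ, Order.lt_succ_iff] at h1 h2
  exact le_antisymm h1 h2

theorem gSucc_covers [Nonempty X] (τ : Ordinal.{u}) {z : X}
    (hz : z ∉ gCov φ W hwo (τ + 1))
    (hw : ∃ w ∈ W (gSeq φ W hwo τ), z ∈ w ∧ w ⊆ φ z) :
    z ∈ φ (gSeq φ W hwo (τ + 1)) := by
  have hs : ∃ τ' : Ordinal.{u}, τ + 1 = τ' + 1 := ⟨τ, rfl⟩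
  have hc : hs.choose = τ := (gSucc_cancel hs.choose_spec).symm
  rw [gSeq_eq φ W hwo (τ + 1), gStep, dif_pos hs, hc]
  exact gPick_covers φ W hwo hz hw

theorem gCov_exists_univ [Nonempty X] (hφm : ∀ x, x ∈ φ x) :
    ∃ σ : Ordinal.{u}, gCov φ W hwo σ = univ := by
  by_contra hcon
  push_neg at hcon
  have haux : ∀ {σ τ : Ordinal.{u}}, σ < τ → gSeq φ W hwo σ ≠ gSeq φ W hwo τ := by
    intro σ τ hlt h
    have h1 : gSeq φ W hwo σ ∈ gCov φ W hwo τ := ⟨σ, hlt, hφm _⟩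
    have h2 : gSeq φ W hwo τ ∉ gCov φ W hwo τ :=
      gSeq_not_mem φ W hwo ((ne_univ_iff_exists_notMem _).mp (hcon τ))
    rw [h] at h1
    exact h2 h1
  have hinj : Function.Injective (gSeq φ W hwo) := by
    intro σ τ h
    rcases lt_trichotomy σ τ with hlt | he | hlt
    · exact absurd h (haux hlt)
    · exact he
    · exact absurd h.symm (haux hlt)
  exact not_small_ordinal.{u, u} (small_of_injective hinj)

end GruenhageAux

theorem gMain {X : Type u} [TopologicalSpace X] [T1Space X]
    (h : SatisfiesWellOrderedF X) : IsDSpace X := by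
  classical
  obtain ⟨W, hwo, hFC⟩ := h
  have hF := hFC.2
  intro φ hφo hφm
  rcases isEmpty_or_nonempty X with hX | hX
  · refine ⟨∅, isClosed_empty, ?_, ?_⟩
    · exact discreteTopology_iff_isOpen_singleton.mpr (fun a => absurd a.2 (Set.notMem_empty _))
    · have huniv : (univ : Set X) = ∅ := Set.univ_eq_empty_iff.mpr hX
      simp [huniv]
  · obtain ⟨Λ₁, hΛ₁⟩ := gCov_exists_univ φ W hwo hφm
    have hSΛne : ({σ : Ordinal.{u} | gCov φ W hwo σ = univ}).Nonempty := ⟨Λ₁, hΛ₁⟩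
    set Λ := WellFounded.min Ordinal.lt_wf _ hSΛne with hΛdef
    have hΛuniv : gCov φ W hwo Λ = univ :=
      WellFounded.min_mem Ordinal.lt_wf _ hSΛne
    have hactive : ∀ σ, σ < Λ → gCov φ W hwo σ ≠ univ := fun σ hσ huniv =>
      WellFounded.not_lt_min Ordinal.lt_wf _ huniv hσ
    set D : Set X := gSeq φ W hwo '' (Set.Iio Λ) with hD
    have hVz := fun z => (hF z (φ z) (hφo z) (hφm z)).choose_spec
    set Vz : X → Set X := fun z => (hF z (φ z) (hφo z) (hφm z)).choose with hVzdef
    have key : ∀ z : X, ∃ N : Set X, IsOpen N ∧ z ∈ N ∧ (D ∩ N).Finite := by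
      intro z
      have hzΛ : z ∈ gCov φ W hwo Λ := hΛuniv ▸ Set.mem_univ z
      obtain ⟨τ₁, hτ₁, hzτ₁⟩ := hzΛ
      have hS₀ne : ({τ : Ordinal.{u} | τ < Λ ∧ z ∈ φ (gSeq φ W hwo τ)}).Nonempty :=
        ⟨τ₁, hτ₁, hzτ₁⟩
      set σ₀ := WellFounded.min Ordinal.lt_wf _ hS₀ne with hσ₀def
      have hσ₀ : σ₀ < Λ ∧ z ∈ φ (gSeq φ W hwo σ₀) :=
        WellFounded.min_mem Ordinal.lt_wf _ hS₀ne
      have hmin : ∀ τ, (τ < Λ ∧ z ∈ φ (gSeq φ W hwo τ)) → ¬ τ < σ₀ := fun τ hτ =>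
        WellFounded.not_lt_min Ordinal.lt_wf _ hτ
      have hznc : ∀ ρ, ρ ≤ σ₀ → z ∉ gCov φ W hwo ρ := by
        intro ρ hρ hmem
        obtain ⟨τ, hτρ, hzφ⟩ := hmem
        exact hmin τ ⟨hτρ.trans_le (hρ.trans hσ₀.1.le), hzφ⟩ (hτρ.trans_le hρ)
      refine ⟨Vz z ∩ φ (gSeq φ W hwo σ₀), (hVz z).1.inter (hφo _), ⟨(hVz z).2.1, hσ₀.2⟩, ?_⟩
      have hsub : D ∩ (Vz z ∩ φ (gSeq φ W hwo σ₀)) ⊆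
          {gSeq φ W hwo σ₀} ∪ (gSeq φ W hwo '' {τ | τ + 1 = σ₀}) := by
        rintro x ⟨⟨σ, hσΛ, rfl⟩, hxV, hxφ⟩
        have hσΛ' : σ < Λ := hσΛ
        have hσle : σ ≤ σ₀ := by
          by_contra hgt
          push_neg at hgt
          have h1 : gSeq φ W hwo σ ∈ gCov φ W hwo σ := ⟨σ₀, hgt, hxφ⟩
          exact gSeq_not_mem φ W hwo
            ((ne_univ_iff_exists_notMem _).mp (hactive σ hσΛ')) h1
        rcases hσle.lt_or_eq with hlt | heq
        · right
          have hs1 : σ + 1 ≤ σ₀ := by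
            rw [Ordinal.add_one_eq_succ]; exact Order.succ_le_of_lt hlt
          have hz1 : z ∉ gCov φ W hwo (σ + 1) := hznc _ hs1
          have hw : ∃ w ∈ W (gSeq φ W hwo σ), z ∈ w ∧ w ⊆ φ z := (hVz z).2.2 _ hxV
          have hcov : z ∈ φ (gSeq φ W hwo (σ + 1)) := gSucc_covers φ W hwo σ hz1 hw
          have heq1 : σ + 1 = σ₀ :=
            hs1.lt_or_eq.resolve_left (hmin _ ⟨lt_of_le_of_lt hs1 hσ₀.1, hcov⟩)
          exact ⟨σ, heq1, rfl⟩
        · left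
          rw [heq]
          exact rfl
      refine Set.Finite.subset (Set.Finite.union (finite_singleton _) ?_) hsub
      apply Set.Subsingleton.finite
      rintro x ⟨τa, ha, rfl⟩ y ⟨τb, hb, rfl⟩
      rw [gSucc_cancel (ha.trans hb.symm)]
    refine ⟨D, ?_, ?_, ?_⟩
    · apply isClosed_of_closure_subset
      intro z hz
      obtain ⟨N, hNo, hzN, hfin⟩ := key z
      have hKfin : ((D ∩ N) \ {z}).Finite := hfin.subset diff_subset
      have hN' : IsOpen (N \ ((D ∩ N) \ {z})) := hNo.sdiff hKfin.isClosed
      have hzN' : z ∈ N \ ((D ∩ N) \ {z}) := ⟨hzN, fun hk => hk.2 rfl⟩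
      obtain ⟨d, hdN', hdD⟩ := mem_closure_iff.mp hz _ hN' hzN'
      by_cases hdz : d = z
      · rw [← hdz]; exact hdD
      · exact absurd ⟨⟨hdD, hdN'.1⟩, hdz⟩ hdN'.2
    · rw [discreteTopology_iff_isOpen_singleton]
      rintro ⟨d, hdD⟩
      obtain ⟨N, hNo, hdN, hfin⟩ := key d
      have hN' : IsOpen (N \ ((D ∩ N) \ {d})) :=
        hNo.sdiff (hfin.subset diff_subset).isClosed
      have hset : {(⟨d, hdD⟩ : ↥D)} = (Subtype.val) ⁻¹' (N \ ((D ∩ N) \ {d})) := by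
        ext e
        simp only [mem_singleton_iff, mem_preimage]
        constructor
        · rintro rfl
          exact ⟨hdN, fun hk => hk.2 rfl⟩
        · rintro ⟨heN, heK⟩
          have hePair : e.val ∈ D ∩ N := ⟨e.2, heN⟩
          have hed : e.val = d := by
            by_contra hne
            exact heK ⟨hePair, hne⟩
          exact Subtype.ext hed
      rw [hset]
      exact hN'.preimage continuous_subtype_val
    · apply Set.eq_univ_of_forall
      intro x
      have hx : x ∈ gCov φ W hwo Λ := hΛuniv ▸ Set.mem_univ x
      obtain ⟨τ, hτ, hxφ⟩ := hx
      exact Set.mem_biUnion ⟨τ, hτ, rfl⟩ hxφ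

theorem stmt2 {X : Type*} [TopologicalSpace X] [T1Space X]
    (h : SatisfiesWellOrderedF X) : IsDSpace X := by
  exact gMain h
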